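/- Let A = ℤ/2 with q(0) = 1 and q(f) = −1 for the nonzero element f, so that A₀ = A and c(f,f) = −1. Identify Â with ℤ/2 via the pairing ⟨x,y⟩ = (−1)^{xy} (representatives in {0,1}). Then the triple given by λ(x,y) = xy·f ∈ A, ω(x,y,z) = i^{xyz}, and t(x,y) = e^{iπ xy/4} is a braided zesting datum of (A,q); i.e. λ is a symmetric 2-cocycle with values in A₀, d³(ω) = λ ∧_c λ, and equations (BZ2) and (BZ3) hold. -/

import Mathlib

/-!
Statement 10: for `A = ℤ/2` with `q(f) = −1`, the triple
`λ(x,y) = xy·f`, `ω(x,y,z) = i^{xyz}`, `t(x,y) = e^{iπxy/4}` is a braided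
zesting datum (identifying `Â` with `ℤ/2` via `⟨x,y⟩ = (−1)^{xy}`).
-/

namespace Zesting

/-- The quadratic form: `q(0) = 1`, `q(f) = −1`. -/
noncomputable def q2 : ZMod 2 → ℂˣ := fun x => if x = 0 then 1 else -1

/-- The symmetric bicharacter `c(x,y) = (−1)^{q̂(x)q̂(y)}` on `A₀ = A`. -/
noncomputable def cc2 (x y : ZMod 2) : ℂˣ := if q2 x = -1 ∧ q2 y = -1 then -1 else 1

/-- The pairing `⟨x,y⟩ = (−1)^{x̄ȳ}` identifying `Â` with `ℤ/2`. -/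
noncomputable def pa2 (x y : ZMod 2) : ℂˣ := (-1 : ℂˣ) ^ (x.val * y.val)

/-- `λ(x,y) = xy·f`. -/
def lam2 : ZMod 2 → ZMod 2 → ZMod 2 := fun x y => x * y

/-- `ω(x,y,z) = i^{x̄ȳz̄}`. -/
noncomputable def w2 : ZMod 2 → ZMod 2 → ZMod 2 → ℂˣ :=
  fun x y z => (Units.mk0 Complex.I Complex.I_ne_zero) ^ (x.val * y.val * z.val)

/-- `t(x,y) = e^{iπ x̄ȳ/4}`. -/
noncomputable def t2 : ZMod 2 → ZMod 2 → ℂˣ :=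
  fun x y =>
    (Units.mk0 (Complex.exp (Real.pi * Complex.I / 4)) (Complex.exp_ne_zero _)) ^
      (x.val * y.val)

/-- `(λ, ω, t)` is a braided zesting datum of `(ℤ/2, q)`:
`λ` is symmetric, valued in `A₀`, a 2-cocycle, `d³(ω) = λ ∧_c λ`, and the
equations (BZ2) and (BZ3) hold. -/
theorem statement10 :
    q2 0 = 1 ∧ q2 1 = -1 ∧
    (∀ x y, lam2 x y = lam2 y x) ∧
    (∀ x y z, q2 (lam2 x y + z) = q2 (lam2 x y) * q2 z) ∧
    (∀ x y z, lam2 y z - lam2 (x + y) z + lam2 x (y + z) - lam2 x y = 0) ∧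
    (∀ x y z w,
      w2 y z w * (w2 (x + y) z w)⁻¹ * w2 x (y + z) w * (w2 x y (z + w))⁻¹ * w2 x y z =
        cc2 (lam2 x y) (lam2 z w)) ∧
    (∀ x y z,
      w2 x y z * w2 y z x / w2 y x z = t2 x y * t2 x z / t2 x (y + z)) ∧
    (∀ x y z,
      pa2 z (lam2 x y) =
        (w2 x y z * w2 z x y / w2 x z y) * (t2 x z * t2 y z / t2 (x + y) z)) := by
  have hE : Complex.exp (Real.pi * Complex.I / 4) * Complex.exp (Real.pi * Complex.I / 4) =
      Complex.I := by
    rw [← Complex.exp_add]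
    have : (Real.pi : ℂ) * Complex.I / 4 + Real.pi * Complex.I / 4 =
        (Real.pi / 2 : ℝ) * Complex.I := by push_cast; ring
    rw [this, Complex.exp_mul_I, ← Complex.ofReal_cos, ← Complex.ofReal_sin]
    norm_num
  have h2 : ∀ x : ZMod 2, x = 0 ∨ x = 1 := by decide
  refine ⟨by norm_num [q2], by norm_num [q2], fun x y => mul_comm x y, ?_, by decide, ?_, ?_, ?_⟩
  · intro x y z
    rcases h2 x with rfl | rfl <;> rcases h2 y with rfl | rfl <;> rcases h2 z with rfl | rfl <;>
      norm_num [q2, lam2, show (1 + 1 : ZMod 2) = 0 from rfl]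
  · intro x y z w
    rcases h2 x with rfl | rfl <;> rcases h2 y with rfl | rfl <;> rcases h2 z with rfl | rfl <;> rcases h2 w with rfl | rfl <;>
      · rw [Units.ext_iff]
        norm_num [w2, t2, cc2, pa2, q2, lam2, show (1 + 1 : ZMod 2) = 0 from rfl,
          show ZMod.val (2 : ZMod 2) = 0 from rfl,
          ZMod.val_one, Complex.I_ne_zero, Complex.exp_ne_zero, hE, Complex.ext_iff]
  · intro x y z
    rcases h2 x with rfl | rfl <;> rcases h2 y with rfl | rfl <;> rcases h2 z with rfl | rfl <;>
      · rw [Units.ext_iff]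
        norm_num [w2, t2, cc2, pa2, q2, lam2, show (1 + 1 : ZMod 2) = 0 from rfl,
          show ZMod.val (2 : ZMod 2) = 0 from rfl,
          ZMod.val_one, Complex.I_ne_zero, Complex.exp_ne_zero, hE, Complex.ext_iff]
  · intro x y z
    rcases h2 x with rfl | rfl <;> rcases h2 y with rfl | rfl <;> rcases h2 z with rfl | rfl <;>
      · rw [Units.ext_iff]
        norm_num [w2, t2, cc2, pa2, q2, lam2, show (1 + 1 : ZMod 2) = 0 from rfl,
          show ZMod.val (2 : ZMod 2) = 0 from rfl,
          ZMod.val_one, Complex.I_ne_zero, Complex.exp_ne_zero, hE, Complex.ext_iff]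

end Zesting
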